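/- arXiv:1208.5604 — 2 statements merged into one kernel-verified Lean document; each statement's English description precedes it below -/
import Mathlib

section
/- Let G = (V, E) be a finite DAG and let s be a vertex with no incoming edges such that every vertex other than s has at least one incoming edge. Let a : E → ℝ be prescribed target values such that for every vertex v ≠ s that has at least one outgoing edge, Σ_{e ∈ inc(v)} a(e) ≠ 0. Then there exists a unique weight function W : E → ℝ such that the edge path-sum α_e(W) equals a(e) for every edge e ∈ E. -/
/-- `IsPathFrom tail head u v p` means the list of edges `p` is a directed path
from vertex `u` to vertex `v`. The empty path goes from `u` to `u`. -/
def IsPathFrom {V E : Type} (tail head : E → V) : V → V → List E → Prop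
  | u, v, [] => u = v
  | u, v, e :: es => tail e = u ∧ IsPathFrom tail head (head e) v es

/-- A directed graph is acyclic if the only directed path from a vertex to itself
is the empty path. -/
def Acyclic {V E : Type} (tail head : E → V) : Prop :=
  ∀ (v : V) (p : List E), IsPathFrom tail head v v p → p = []

/-- The weight of a path is the product of the weights of its edges. -/
def pathWeight {E : Type} (W : E → ℝ) (p : List E) : ℝ := (p.map W).prod

/-- The edge path-sum `α_e(W)`: the sum of the weights of all directed paths
starting at the source `s` whose last edge is `e`. -/
noncomputable def edgeAlpha {V E : Type} (tail head : E → V) (W : E → ℝ) (s : V) (e : E) : ℝ :=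
  ∑ᶠ p ∈ {p : List E | IsPathFrom tail head s (head e) p ∧ p.getLast? = some e},
    pathWeight W p

section Aux

open scoped Classical

variable {V E : Type} (tail head : E → V)

lemma isPathFrom_append (u v : V) (p q : List E) :
    IsPathFrom tail head u v (p ++ q) ↔
      ∃ w, IsPathFrom tail head u w p ∧ IsPathFrom tail head w v q := by
  induction p generalizing u with
  | nil => simp [IsPathFrom]
  | cons e es ih => simp [IsPathFrom, ih, and_assoc]

lemma isPathFrom_singleton (u v : V) (e : E) :
    IsPathFrom tail head u v [e] ↔ tail e = u ∧ head e = v := by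
  simp [IsPathFrom]

variable {tail head}

lemma nodup_of_isPathFrom (hacyc : Acyclic tail head)
    {u v : V} {p : List E} (hp : IsPathFrom tail head u v p) : p.Nodup := by
  induction p generalizing u with
  | nil => simp
  | cons e es ih =>
    obtain ⟨-, hes⟩ := hp
    refine List.nodup_cons.mpr ⟨?_, ih hes⟩
    intro hmem
    obtain ⟨l1, l2, rfl⟩ := List.append_of_mem hmem
    rw [isPathFrom_append] at hes
    obtain ⟨w, h1, h2⟩ := hes
    have h2' : tail e = w ∧ IsPathFrom tail head (head e) v l2 := h2
    have : IsPathFrom tail head (head e) (head e) (l1 ++ [e]) := by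
      rw [isPathFrom_append]
      exact ⟨w, h1, (isPathFrom_singleton ..).mpr ⟨h2'.1, rfl⟩⟩
    have := hacyc _ _ this
    simp at this

lemma finite_paths [Fintype E] (hacyc : Acyclic tail head)
    (u v : V) : {p : List E | IsPathFrom tail head u v p}.Finite := by
  apply (List.finite_length_le E (Fintype.card E)).subset
  intro p hp
  exact (nodup_of_isPathFrom hacyc hp).length_le_card

/-- The set of paths ending in `e` is the image of paths to `tail e` under appending `e`. -/
lemma alpha_set_eq (s : V) (e : E) :
    {p : List E | IsPathFrom tail head s (head e) p ∧ p.getLast? = some e} =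
      (fun q => q ++ [e]) '' {q : List E | IsPathFrom tail head s (tail e) q} := by
  ext p
  simp only [Set.mem_setOf_eq, Set.mem_image]
  constructor
  · rintro ⟨hp, hlast⟩
    obtain ⟨q, rfl⟩ := List.getLast?_eq_some_iff.mp hlast
    refine ⟨q, ?_, rfl⟩
    rw [isPathFrom_append] at hp
    obtain ⟨w, h1, h2⟩ := hp
    rw [isPathFrom_singleton] at h2
    rw [h2.1]; exact h1
  · rintro ⟨q, hq, rfl⟩
    refine ⟨?_, List.getLast?_concat⟩
    rw [isPathFrom_append]
    exact ⟨tail e, hq, (isPathFrom_singleton ..).mpr ⟨rfl, rfl⟩⟩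

lemma edgeAlpha_eq_mul [Fintype E] (hacyc : Acyclic tail head) (W : E → ℝ) (s : V) (e : E) :
    edgeAlpha tail head W s e =
      W e * ∑ᶠ q ∈ {q : List E | IsPathFrom tail head s (tail e) q}, pathWeight W q := by
  have hfin := finite_paths hacyc s (tail e)
  rw [edgeAlpha, alpha_set_eq s e]
  rw [finsum_mem_image (by intro x _ y _ h; simpa using h)]
  rw [← Set.Finite.coe_toFinset hfin, finsum_mem_coe_finset, finsum_mem_coe_finset,
    Finset.mul_sum]
  refine Finset.sum_congr rfl fun q _ => ?_
  simp [pathWeight, mul_comm]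

lemma beta_source [Fintype E] (s : V) (hs : ∀ e : E, head e ≠ s) :
    ∑ᶠ q ∈ {q : List E | IsPathFrom tail head s s q}, pathWeight W q = 1 := by
  have : {q : List E | IsPathFrom tail head s s q} = {([] : List E)} := by
    ext p
    simp only [Set.mem_setOf_eq, Set.mem_singleton_iff]
    constructor
    · intro hp
      rcases p.eq_nil_or_concat with rfl | ⟨q, e, rfl⟩
      · rfl
      · rw [List.concat_eq_append, isPathFrom_append] at hp
        obtain ⟨w, -, h2⟩ := hp
        rw [isPathFrom_singleton] at h2
        exact absurd h2.2 (hs e)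
    · rintro rfl; exact rfl
  rw [this, finsum_mem_singleton]
  simp [pathWeight]

lemma beta_notsource [Fintype E] (hacyc : Acyclic tail head) (W : E → ℝ) (s v : V)
    (hv : v ≠ s) :
    ∑ᶠ q ∈ {q : List E | IsPathFrom tail head s v q}, pathWeight W q =
      ∑ e ∈ Finset.univ.filter (fun e : E => head e = v), edgeAlpha tail head W s e := by
  classical
  have hfin := finite_paths hacyc s v
  have hsub : ∀ e : E, {p : List E | IsPathFrom tail head s (head e) p ∧
      p.getLast? = some e}.Finite := fun e =>
    (finite_paths hacyc s (head e)).subset (fun p hp => hp.1)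
  have hun : hfin.toFinset =
      (Finset.univ.filter (fun e : E => head e = v)).biUnion
        (fun e => (hsub e).toFinset) := by
    ext p
    simp only [Set.Finite.mem_toFinset, Set.mem_setOf_eq, Finset.mem_biUnion,
      Finset.mem_filter, Finset.mem_univ, true_and]
    constructor
    · intro hp
      rcases p.eq_nil_or_concat with rfl | ⟨q, e, rfl⟩
      · exact absurd hp.symm hv
      · simp only [List.concat_eq_append] at hp ⊢
        rw [isPathFrom_append] at hp
        obtain ⟨w, h1, h2⟩ := hp
        rw [isPathFrom_singleton] at h2
        refine ⟨e, h2.2, ?_, List.getLast?_concat⟩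
        rw [h2.2, isPathFrom_append]
        exact ⟨tail e, by rw [h2.1]; exact h1, (isPathFrom_singleton ..).mpr ⟨rfl, h2.2⟩⟩
    · rintro ⟨e, he, hp, -⟩
      rwa [he] at hp
  rw [← Set.Finite.coe_toFinset hfin, finsum_mem_coe_finset, hun, Finset.sum_biUnion]
  · refine Finset.sum_congr rfl fun e _ => ?_
    rw [edgeAlpha, ← finsum_mem_coe_finset, Set.Finite.coe_toFinset]
  · intro e1 h1 e2 h2 hne
    simp only [Finset.disjoint_left, Set.Finite.mem_toFinset, Set.mem_setOf_eq]
    rintro p ⟨-, hl1⟩ ⟨-, hl2⟩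
    rw [hl1] at hl2
    exact hne (Option.some.inj hl2)

lemma edgeAlpha_rec [Fintype E] (hacyc : Acyclic tail head) (s : V)
    (hs : ∀ e : E, head e ≠ s) (W : E → ℝ) (e : E) :
    edgeAlpha tail head W s e =
      W e * (if tail e = s then 1 else
        ∑ e' ∈ Finset.univ.filter (fun e' : E => head e' = tail e),
          edgeAlpha tail head W s e') := by
  rw [edgeAlpha_eq_mul hacyc]
  split_ifs with h
  · rw [h, beta_source s hs]
  · rw [beta_notsource hacyc W s _ h]

end Aux

/-- Let `G = (V, E)` be a finite DAG and `s` a vertex with no incoming edges such that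
every other vertex has at least one incoming edge. Given target values `a : E → ℝ`
such that for every vertex `v ≠ s` with at least one outgoing edge the sum of `a`
over the incoming edges of `v` is nonzero, there exists a unique weight function
`W : E → ℝ` realizing `α_e(W) = a(e)` for every edge `e`. -/
theorem exists_unique_weights_realizing_edgeAlpha {V E : Type} [Fintype V] [Fintype E]
    (tail head : E → V) (hacyc : Acyclic tail head)
    (s : V) (hs : ∀ e : E, head e ≠ s)
    (hin : ∀ v : V, v ≠ s → ∃ e : E, head e = v)
    (a : E → ℝ)
    (ha : ∀ v : V, v ≠ s → (∃ e : E, tail e = v) →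
      (∑ᶠ e ∈ {e : E | head e = v}, a e) ≠ 0) :
    ∃! W : E → ℝ, ∀ e : E, edgeAlpha tail head W s e = a e := by
  classical
  -- the "vertex sum" b
  set b : V → ℝ := fun v => if v = s then 1 else
    ∑ e ∈ Finset.univ.filter (fun e : E => head e = v), a e with hb
  have hb_ne : ∀ e : E, b (tail e) ≠ 0 := by
    intro e
    by_cases h : tail e = s
    · simp [hb, h]
    · have := ha (tail e) h ⟨e, rfl⟩
      rw [show {e' : E | head e' = tail e} =
          ↑(Finset.univ.filter (fun e' : E => head e' = tail e)) by ext; simp,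
        finsum_mem_coe_finset] at this
      simpa [hb, h] using this
  -- well-foundedness of the predecessor relation
  set r : E → E → Prop := fun e' e => head e' = tail e with hr
  have hpath : ∀ x y : E, Relation.TransGen r x y →
      ∃ p : List E, IsPathFrom tail head (head x) (head y) (p ++ [y]) := by
    intro x y h
    induction h with
    | single h =>
      refine ⟨[], ?_⟩
      simp only [List.nil_append, isPathFrom_singleton]
      exact ⟨(show head _ = tail _ from h).symm, trivial⟩
    | tail h1 h2 ih =>
      obtain ⟨p, hp⟩ := ih
      rename_i y' z
      refine ⟨p ++ [y'], ?_⟩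
      rw [isPathFrom_append]
      exact ⟨head y', hp, (isPathFrom_singleton ..).mpr ⟨h2.symm, rfl⟩⟩
  haveI : IsTrans E (Relation.TransGen r) := ⟨fun _ _ _ => Relation.TransGen.trans⟩
  haveI : IsIrrefl E (Relation.TransGen r) := by
    constructor
    intro e h
    obtain ⟨p, hp⟩ := hpath e e h
    have := hacyc _ _ hp
    simp at this
  have wf : WellFounded r :=
    Subrelation.wf (fun h => Relation.TransGen.single h)
      (Finite.wellFounded_of_trans_of_irrefl (Relation.TransGen r))
  -- the candidate weights
  set W₀ : E → ℝ := fun e => a e / b (tail e) with hW₀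
  -- key computation: for any W, beta value equals b when alpha = a on predecessors
  have hbval : ∀ (W : E → ℝ) (e : E),
      (∀ e' : E, r e' e → edgeAlpha tail head W s e' = a e') →
      edgeAlpha tail head W s e = W e * b (tail e) := by
    intro W e hpre
    rw [edgeAlpha_rec hacyc s hs W e]
    congr 1
    simp only [hb]
    split_ifs with h
    · rfl
    · exact Finset.sum_congr rfl fun e' he' =>
        hpre e' (show head e' = tail e from (Finset.mem_filter.mp he').2)
  have hW0 : ∀ e : E, edgeAlpha tail head W₀ s e = a e := by
    intro e
    induction e using wf.induction with
    | _ e ih =>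
      rw [hbval W₀ e ih, hW₀]
      exact div_mul_cancel₀ (a e) (hb_ne e)
  refine ⟨W₀, hW0, ?_⟩
  intro W hW
  funext e
  have h1 : a e = W e * b (tail e) := by
    rw [← hW e]
    exact hbval W e fun e' _ => hW e'
  have h2 : W e = a e / b (tail e) := by
    rw [eq_div_iff (hb_ne e)]; exact h1.symm
  rw [h2, hW₀]
end

section
/- Let E be a finite nonempty index set, let a : E → ℝ be strictly positive, let Δ > 0, U > 0, δ > 0 be reals, set c = 2U/δ, let R̄ be a real number such that B := R̄·Δ is an integer, and set κ = 2^B / c. Then for every e ∈ E: Δ⁻¹·⌈log₂( c · a(e) / min_{ē ∈ E} a(ē) )⌉ ≤ R̄ if and only if a(e) − κ·a(ē) ≤ 0 for all ē ∈ E. -/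
/-- Equivalence chain in the proof of the paper's Proposition 4: the data-rate
constraint `Δ⁻¹·⌈log₂(c·a(e)/min_{e'} a(e'))⌉ ≤ R̄` (with `c = 2U/δ`, `B = R̄·Δ` an
integer, and `κ = 2^B/c`) holds if and only if `a(e) - κ·a(e') ≤ 0` for all `e'`. -/
theorem dataRate_constraint_iff_linear {E : Type} [Fintype E] [Nonempty E]
    (a : E → ℝ) (ha : ∀ e : E, 0 < a e)
    (Δ U δ R : ℝ) (hΔ : 0 < Δ) (hU : 0 < U) (hδ : 0 < δ)
    (c : ℝ) (hc : c = 2 * U / δ)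
    (B : ℤ) (hB : (B : ℝ) = R * Δ)
    (κ : ℝ) (hκ : κ = (2 : ℝ) ^ B / c) :
    ∀ e : E,
      (Δ⁻¹ * (⌈Real.logb 2 (c * a e / Finset.univ.inf' Finset.univ_nonempty a)⌉ : ℝ) ≤ R
        ↔ ∀ e' : E, a e - κ * a e' ≤ 0) := by
  intro e
  set m : ℝ := Finset.univ.inf' Finset.univ_nonempty a with hm
  have hc0 : 0 < c := by rw [hc]; positivity
  have hm0 : 0 < m := (Finset.lt_inf'_iff _).mpr fun i _ => ha i
  have h2B : (0:ℝ) < (2:ℝ) ^ B := zpow_pos (by norm_num) B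
  have hκ0 : 0 < κ := by rw [hκ]; exact div_pos h2B hc0
  have hx0 : 0 < c * a e / m := div_pos (mul_pos hc0 (ha e)) hm0
  constructor
  · intro h e'
    -- from h: ⌈logb⌉ ≤ B
    have h1 : (⌈Real.logb 2 (c * a e / m)⌉ : ℝ) ≤ (B : ℝ) := by
      rw [hB]
      have := mul_le_mul_of_nonneg_right h (le_of_lt hΔ)
      calc (⌈Real.logb 2 (c * a e / m)⌉ : ℝ)
          = Δ⁻¹ * (⌈Real.logb 2 (c * a e / m)⌉ : ℝ) * Δ := by
            field_simp
        _ ≤ R * Δ := this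
    have h2 : Real.logb 2 (c * a e / m) ≤ (B : ℝ) := by
      exact_mod_cast le_trans (Int.le_ceil _) h1
    have h3 : c * a e / m ≤ (2:ℝ) ^ B := by
      have := (Real.logb_le_iff_le_rpow (by norm_num) hx0).mp h2
      rwa [Real.rpow_intCast] at this
    have h4 : a e ≤ κ * m := by
      rw [hκ]
      rw [div_le_iff₀ hm0] at h3
      rw [div_mul_eq_mul_div, le_div_iff₀ hc0, mul_comm (a e) c]
      linarith
    have hme' : m ≤ a e' := Finset.inf'_le a (Finset.mem_univ e')
    nlinarith
  · intro h
    obtain ⟨i, _, hi⟩ := Finset.exists_mem_eq_inf' (Finset.univ_nonempty) a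
    have h4 : a e ≤ κ * m := by
      have := h i
      rw [hm, hi]; linarith
    have h3 : c * a e / m ≤ (2:ℝ) ^ B := by
      rw [div_le_iff₀ hm0]
      rw [hκ, div_mul_eq_mul_div, le_div_iff₀ hc0] at h4
      nlinarith
    have h2 : Real.logb 2 (c * a e / m) ≤ (B : ℝ) := by
      apply (Real.logb_le_iff_le_rpow (by norm_num) hx0).mpr
      rwa [Real.rpow_intCast]
    have h1 : (⌈Real.logb 2 (c * a e / m)⌉ : ℝ) ≤ (B : ℝ) := by
      exact_mod_cast Int.ceil_le.mpr h2
    calc Δ⁻¹ * (⌈Real.logb 2 (c * a e / m)⌉ : ℝ)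
        ≤ Δ⁻¹ * (B : ℝ) := by
          apply mul_le_mul_of_nonneg_left h1 (by positivity)
      _ = R := by rw [hB]; field_simp
end
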